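/- Let (X,d) be a proper metric space with basepoint x₀, A a closed subset containing x₀, and W an open linear neighborhood of A (i.e., there is c > 0 with d(A \ B_r, (X\W) \ B_r) ≥ cr for all r > 0). Suppose f ∈ U(W,x₀) is bounded. Define φ(x) = d(x, X\W)/(d(x,A) + d(x, X\W)) and f̂: X → ℂ by f̂(x) = φ(x)·f(x) for x ∈ W and f̂(x) = 0 for x ∉ W. Then f̂ ∈ U(X,x₀) and f̂ agrees with f on A. -/

import Mathlib

open Metric Classical

/-- `h ∈ U(X, x0)` for complex-valued functions. -/
def MemU {X : Type*} [MetricSpace X] (x0 : X) (h : X → ℂ) : Prop :=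
  (∃ M : ℝ, ∀ x : X, ‖h x‖ ≤ M) ∧ Continuous h ∧
    ∃ c : ℝ, 0 ≤ c ∧ ∀ x y : X, ‖h x - h y‖ * dist x x0 ≤ c * dist x y

/-- (Part of the proof of Proposition 3.4.) Let `X` be a proper metric space
with basepoint `x0`, `A` a nonempty closed subset containing `x0`, and `W ≠ X`
an open linear neighborhood of `A` (with linearity constant `c > 0`, stated
pointwise).  Given `f` which on `W` is bounded, continuous and satisfies the
`U`-inequality, the function `f̂` defined by
`f̂(x) = (d(x, X\W)/(d(x,A)+d(x,X\W))) · f(x)` on `W` and `f̂ = 0` off `W`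
belongs to `U(X, x0)` and agrees with `f` on `A`. -/
theorem cutoff_extension_memU
    {X : Type*} [MetricSpace X] [ProperSpace X] (x0 : X)
    (A W : Set X) (hA : IsClosed A) (hAne : A.Nonempty) (hx0 : x0 ∈ A)
    (hW : IsOpen W) (hAW : A ⊆ W) (hWne : W ≠ Set.univ)
    (c : ℝ) (hc : 0 < c)
    (hlin : ∀ r : ℝ, 0 < r → ∀ a ∈ A, r ≤ dist a x0 →
      ∀ b ∉ W, r ≤ dist b x0 → c * r ≤ dist a b)
    (f : X → ℂ) (M : ℝ) (hfb : ∀ x ∈ W, ‖f x‖ ≤ M)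
    (hfc : ContinuousOn f W)
    (cf : ℝ) (hcf : 0 ≤ cf)
    (hflip : ∀ x ∈ W, ∀ y ∈ W, ‖f x - f y‖ * dist x x0 ≤ cf * dist x y) :
    MemU x0 (fun x => if x ∈ W then
        ((infDist x Wᶜ / (infDist x A + infDist x Wᶜ) : ℝ) : ℂ) * f x
      else 0) ∧
    ∀ a ∈ A, (if a ∈ W then
        ((infDist a Wᶜ / (infDist a A + infDist a Wᶜ) : ℝ) : ℂ) * f a
      else 0) = f a := by
  classical
  have hWcne : Wᶜ.Nonempty := by
    rw [Set.ne_univ_iff_exists_notMem] at hWne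
    exact hWne
  have hWcc : IsClosed Wᶜ := hW.isClosed_compl
  set M' : ℝ := max M 0 with hM'def
  have hM'0 : 0 ≤ M' := le_max_right _ _
  have hfb' : ∀ x ∈ W, ‖f x‖ ≤ M' := fun x hx => (hfb x hx).trans (le_max_left _ _)
  set g : X → ℝ := fun x => infDist x Wᶜ with hgdef
  set e : X → ℝ := fun x => infDist x A with hedef
  have hg0 : ∀ x, 0 ≤ g x := fun x => infDist_nonneg
  have he0 : ∀ x, 0 ≤ e x := fun x => infDist_nonneg
  have hgpos : ∀ x ∈ W, 0 < g x := fun x hx =>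
    (hWcc.notMem_iff_infDist_pos hWcne).mp (by simpa using hx)
  have hDpos : ∀ x ∈ W, 0 < e x + g x := fun x hx =>
    add_pos_of_nonneg_of_pos (he0 x) (hgpos x hx)
  have lipg : ∀ x y : X, |g x - g y| ≤ dist x y := by
    intro x y
    rw [abs_sub_le_iff]
    constructor
    · have h1 := infDist_le_infDist_add_dist (s := Wᶜ) (x := x) (y := y)
      simp only [hgdef]; linarith
    · have h1 := infDist_le_infDist_add_dist (s := Wᶜ) (x := y) (y := x)
      rw [dist_comm] at h1
      simp only [hgdef]; linarith
  have lipe : ∀ x y : X, |e x - e y| ≤ dist x y := by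
    intro x y
    rw [abs_sub_le_iff]
    constructor
    · have h1 := infDist_le_infDist_add_dist (s := A) (x := x) (y := y)
      simp only [hedef]; linarith
    · have h1 := infDist_le_infDist_add_dist (s := A) (x := y) (y := x)
      rw [dist_comm] at h1
      simp only [hedef]; linarith
  set κ : ℝ := c / (1 + c) with hκdef
  have hκ : 0 < κ := div_pos hc (by linarith)
  have hκ1 : κ ≤ 1 := by
    rw [hκdef, div_le_one (by linarith)]; linarith
  have key : ∀ x : X, κ * dist x x0 ≤ e x + g x := by
    intro x
    rcases le_or_gt (dist x x0) (e x + g x) with h | h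
    · calc κ * dist x x0 ≤ 1 * dist x x0 :=
            mul_le_mul_of_nonneg_right hκ1 dist_nonneg
        _ = dist x x0 := one_mul _
        _ ≤ e x + g x := h
    · obtain ⟨a, haA, hae⟩ := hA.exists_infDist_eq_dist hAne x
      obtain ⟨b, hbW, hbg⟩ := hWcc.exists_infDist_eq_dist hWcne x
      have hea : e x = dist x a := hae
      have hgb : g x = dist x b := hbg
      set r : ℝ := dist x x0 - (e x + g x) with hrdef
      have hrpos : 0 < r := by simp only [hrdef]; linarith
      have har : r ≤ dist a x0 := by
        have h1 : dist x x0 ≤ dist x a + dist a x0 := dist_triangle _ _ _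
        have := hg0 x
        simp only [hrdef]; linarith
      have hbr : r ≤ dist b x0 := by
        have h1 : dist x x0 ≤ dist x b + dist b x0 := dist_triangle _ _ _
        have := he0 x
        simp only [hrdef]; linarith
      have hcr := hlin r hrpos a haA har b hbW hbr
      have hdab : dist a b ≤ e x + g x := by
        calc dist a b ≤ dist a x + dist x b := dist_triangle _ _ _
          _ = e x + g x := by rw [dist_comm a x, ← hea, ← hgb]
      rw [hκdef, div_mul_eq_mul_div, div_le_iff₀ (by linarith : (0:ℝ) < 1 + c)]
      simp only [hrdef] at hcr
      nlinarith [dist_nonneg (x := x) (y := x0)]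
  have hxled : ∀ x : X, dist x x0 ≤ (e x + g x) / κ := by
    intro x
    rw [le_div_iff₀ hκ]
    linarith [key x]
  have philip : ∀ x ∈ W, ∀ y ∈ W,
      |g x / (e x + g x) - g y / (e y + g y)| ≤ 3 * dist x y / (e x + g x) := by
    intro x hx y hy
    have Dx := hDpos x hx
    have Dy := hDpos y hy
    have hrw : g x / (e x + g x) - g y / (e y + g y)
        = ((g x - g y) * (e y + g y) + g y * ((e y + g y) - (e x + g x)))
          / ((e x + g x) * (e y + g y)) := by
      field_simp
      ring
    rw [hrw, abs_div, abs_of_pos (mul_pos Dx Dy),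
      div_le_div_iff₀ (mul_pos Dx Dy) Dx]
    have h2 : |(e y + g y) - (e x + g x)| ≤ 2 * dist x y := by
      have ha := lipe x y; have hb := lipg x y
      rw [abs_le] at ha hb ⊢
      constructor <;> [linarith [ha.1, hb.1, ha.2, hb.2]; linarith [ha.1, hb.1, ha.2, hb.2]]
    have h1 : |(g x - g y) * (e y + g y) + g y * ((e y + g y) - (e x + g x))|
        ≤ 3 * dist x y * (e y + g y) := by
      calc |(g x - g y) * (e y + g y) + g y * ((e y + g y) - (e x + g x))|
          ≤ |(g x - g y) * (e y + g y)| + |g y * ((e y + g y) - (e x + g x))| :=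
            abs_add_le _ _
        _ = |g x - g y| * (e y + g y) + g y * |(e y + g y) - (e x + g x)| := by
            rw [abs_mul, abs_mul, abs_of_pos Dy, abs_of_nonneg (hg0 y)]
        _ ≤ 3 * dist x y * (e y + g y) := by
            nlinarith [lipg x y, h2, hg0 y, he0 y, abs_nonneg ((e y + g y) - (e x + g x)),
              dist_nonneg (x := x) (y := y)]
    nlinarith [dist_nonneg (x := x) (y := y)]
  have hφ0 : ∀ x, 0 ≤ g x / (e x + g x) := fun x =>
    div_nonneg (hg0 x) (by linarith [hg0 x, he0 x])
  have hφ1 : ∀ x ∈ W, g x / (e x + g x) ≤ 1 := by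
    intro x hx
    rw [div_le_one (hDpos x hx)]
    linarith [he0 x]
  -- abbreviation for the function
  set F : X → ℂ := fun x => if x ∈ W then
      ((infDist x Wᶜ / (infDist x A + infDist x Wᶜ) : ℝ) : ℂ) * f x else 0 with hFdef
  have hFW : ∀ x ∈ W, F x = ((g x / (e x + g x) : ℝ) : ℂ) * f x := by
    intro x hx; simp only [hFdef, if_pos hx, hgdef, hedef]
  have hFnW : ∀ x ∉ W, F x = 0 := by
    intro x hx; simp only [hFdef, if_neg hx]
  have habsFW : ∀ x ∈ W, ‖F x‖ = g x / (e x + g x) * ‖f x‖ := by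
    intro x hx
    rw [hFW x hx, norm_mul, Complex.norm_real, Real.norm_eq_abs, abs_of_nonneg (hφ0 x)]
  refine ⟨⟨⟨M', ?_⟩, ?_, ?_⟩, ?_⟩
  · -- boundedness
    intro x
    by_cases hx : x ∈ W
    · rw [habsFW x hx]
      calc g x / (e x + g x) * ‖f x‖ ≤ 1 * M' :=
          mul_le_mul (hφ1 x hx) (hfb' x hx) (norm_nonneg _) zero_le_one
        _ = M' := one_mul _
    · rw [hFnW x hx, norm_zero]; exact hM'0
  · -- continuity
    rw [continuous_iff_continuousAt]
    intro x
    by_cases hx : x ∈ W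
    · have hcont : ContinuousAt (fun y => ((g y / (e y + g y) : ℝ) : ℂ) * f y) x := by
        apply ContinuousAt.mul
        · apply Complex.continuous_ofReal.continuousAt.comp
          exact ContinuousAt.div (continuous_infDist_pt Wᶜ).continuousAt
            ((continuous_infDist_pt A).add (continuous_infDist_pt Wᶜ)).continuousAt
            (ne_of_gt (hDpos x hx))
        · exact hfc.continuousAt (hW.mem_nhds hx)
      apply hcont.congr
      filter_upwards [hW.mem_nhds hx] with y hy
      exact (hFW y hy).symm
    · rw [Metric.continuousAt_iff]
      intro ε hε
      have hxA : x ∉ A := fun h => hx (hAW h)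
      have hex : 0 < e x := (hA.notMem_iff_infDist_pos hAne).mp hxA
      refine ⟨min (e x / 2) (ε * e x / (2 * (M' + 1))), ?_, ?_⟩
      · apply lt_min (by linarith)
        positivity
      · intro y hy
        rw [hFnW x hx, dist_zero_right]
        by_cases hyW : y ∈ W
        · have hgy : g y ≤ dist y x := infDist_le_dist_of_mem (by simpa using hx)
          have hey : e x - dist y x ≤ e y := by
            have := lipe x y
            rw [abs_le, dist_comm] at this
            linarith [this.1]
          have hd1 : dist y x < e x / 2 := lt_of_lt_of_le hy (min_le_left _ _)
          have hd2 : dist y x < ε * e x / (2 * (M' + 1)) := lt_of_lt_of_le hy (min_le_right _ _)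
          have hDy : e x / 2 ≤ e y + g y := by linarith [hg0 y]
          have hφy : g y / (e y + g y) ≤ dist y x / (e x / 2) := by
            apply div_le_div₀ (dist_nonneg) hgy (by linarith) hDy
          have h1 : ‖F y‖ ≤ M' * (dist y x / (e x / 2)) := by
            rw [habsFW y hyW]
            calc g y / (e y + g y) * ‖f y‖
                ≤ (dist y x / (e x / 2)) * M' :=
                  mul_le_mul hφy (hfb' y hyW) (norm_nonneg _)
                    (div_nonneg dist_nonneg (by linarith))
              _ = M' * (dist y x / (e x / 2)) := mul_comm _ _
          have h2 : M' * (dist y x / (e x / 2)) < ε := by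
            rw [lt_div_iff₀ (by positivity : (0:ℝ) < 2 * (M' + 1))] at hd2
            rw [mul_div_assoc', div_lt_iff₀ (by linarith : (0:ℝ) < e x / 2)]
            nlinarith [dist_nonneg (x := y) (y := x)]
          exact lt_of_le_of_lt h1 h2
        · rw [hFnW y hyW]
          simpa using hε
  · -- U-inequality
    refine ⟨cf + M' * (3 / κ + 1), by positivity, ?_⟩
    intro x y
    set d := dist x y with hddef
    have hd0 : 0 ≤ d := dist_nonneg
    by_cases hx : x ∈ W
    · by_cases hy : y ∈ W
      · -- both in W
        set φx := g x / (e x + g x) with hφxdef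
        set φy := g y / (e y + g y) with hφydef
        have hstep : ‖F x - F y‖
            ≤ φx * ‖f x - f y‖ + |φx - φy| * M' := by
          rw [hFW x hx, hFW y hy]
          have hsplit : ((φx : ℂ)) * f x - (φy : ℂ) * f y
              = (φx : ℂ) * (f x - f y) + ((φx : ℂ) - (φy : ℂ)) * f y := by ring
          rw [hsplit]
          calc ‖(φx : ℂ) * (f x - f y) + ((φx : ℂ) - (φy : ℂ)) * f y‖
              ≤ ‖(φx : ℂ) * (f x - f y)‖
                + ‖((φx : ℂ) - (φy : ℂ)) * f y‖ := norm_add_le _ _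
            _ = |φx| * ‖f x - f y‖ + |φx - φy| * ‖f y‖ := by
                rw [norm_mul, norm_mul, Complex.norm_real, ← Complex.ofReal_sub,
                  Complex.norm_real, Real.norm_eq_abs, Real.norm_eq_abs]
            _ ≤ φx * ‖f x - f y‖ + |φx - φy| * M' := by
                rw [abs_of_nonneg (hφ0 x)]
                gcongr
                exact hfb' y hy
        have hφd : |φx - φy| * dist x x0 ≤ 3 / κ * d := by
          calc |φx - φy| * dist x x0
              ≤ (3 * d / (e x + g x)) * ((e x + g x) / κ) :=
                mul_le_mul (philip x hx y hy) (hxled x) dist_nonneg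
                  (div_nonneg (by linarith) (le_of_lt (hDpos x hx)))
            _ = 3 / κ * d := by
                have hDx := (hDpos x hx).ne'
                field_simp
        calc ‖F x - F y‖ * dist x x0
            ≤ (φx * ‖f x - f y‖ + |φx - φy| * M') * dist x x0 :=
              mul_le_mul_of_nonneg_right hstep dist_nonneg
          _ = φx * (‖f x - f y‖ * dist x x0) + M' * (|φx - φy| * dist x x0) := by
              ring
          _ ≤ 1 * (cf * d) + M' * (3 / κ * d) := by
              apply add_le_add
              · exact mul_le_mul (hφ1 x hx) (hflip x hx y hy)
                  (mul_nonneg (norm_nonneg _) dist_nonneg) zero_le_one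
              · exact mul_le_mul_of_nonneg_left hφd hM'0
          _ = cf * d + 3 * (M' * d) / κ := by ring
          _ ≤ (cf + M' * (3 / κ + 1)) * d := by
              have hMd : 0 ≤ M' * d := mul_nonneg hM'0 hd0
              have : (cf + M' * (3 / κ + 1)) * d = cf * d + 3 * (M' * d) / κ + M' * d := by
                ring
              linarith
      · -- x ∈ W, y ∉ W
        rw [hFnW y hy, sub_zero]
        have hgx : g x ≤ d := infDist_le_dist_of_mem (by simpa using hy)
        have hDx := (hDpos x hx).ne'
        have hMd : 0 ≤ M' * d := mul_nonneg hM'0 hd0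
        calc ‖F x‖ * dist x x0
            ≤ (g x / (e x + g x) * M') * ((e x + g x) / κ) := by
              apply mul_le_mul _ (hxled x) dist_nonneg (mul_nonneg (hφ0 x) hM'0)
              rw [habsFW x hx]
              exact mul_le_mul_of_nonneg_left (hfb' x hx) (hφ0 x)
          _ = M' * g x / κ := by
              field_simp
          _ ≤ M' * d / κ := by gcongr
          _ ≤ (cf + M' * (3 / κ + 1)) * d := by
              have h2 : M' * d / κ ≤ 3 * (M' * d) / κ := by gcongr ?_ / κ; linarith
              have h3 : (cf + M' * (3 / κ + 1)) * d
                  = cf * d + 3 * (M' * d) / κ + M' * d := by ring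
              linarith [mul_nonneg hcf hd0]
    · by_cases hy : y ∈ W
      · -- x ∉ W, y ∈ W
        rw [hFnW x hx]
        rw [zero_sub, norm_neg]
        have hDy := (hDpos y hy).ne'
        have hMd : 0 ≤ M' * d := mul_nonneg hM'0 hd0
        have hgy : g y ≤ d := by
          rw [hddef, dist_comm]
          exact infDist_le_dist_of_mem hx
        have hxy : dist x x0 ≤ dist y x0 + d := by
          rw [hddef]
          linarith [dist_triangle x y x0]
        have habs : ‖F y‖ ≤ g y / (e y + g y) * M' := by
          rw [habsFW y hy]
          exact mul_le_mul_of_nonneg_left (hfb' y hy) (hφ0 y)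
        have h2 : g y / (e y + g y) * dist y x0 ≤ d / κ := by
          calc g y / (e y + g y) * dist y x0
              ≤ (g y / (e y + g y)) * ((e y + g y) / κ) :=
                mul_le_mul_of_nonneg_left (hxled y) (hφ0 y)
            _ = g y / κ := by field_simp
            _ ≤ d / κ := by gcongr
        have h3 : g y / (e y + g y) * d ≤ 1 * d :=
          mul_le_mul_of_nonneg_right (hφ1 y hy) hd0
        calc ‖F y‖ * dist x x0
            ≤ (g y / (e y + g y) * M') * (dist y x0 + d) :=
              mul_le_mul habs hxy dist_nonneg (mul_nonneg (hφ0 y) hM'0)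
          _ = M' * (g y / (e y + g y) * dist y x0) + M' * (g y / (e y + g y) * d) := by
              ring
          _ ≤ M' * (d / κ) + M' * (1 * d) := by
              exact add_le_add (mul_le_mul_of_nonneg_left h2 hM'0)
                (mul_le_mul_of_nonneg_left h3 hM'0)
          _ ≤ (cf + M' * (3 / κ + 1)) * d := by
              have hh : M' * (d / κ) ≤ 3 * (M' * d) / κ := by
                rw [mul_div_assoc']
                gcongr ?_ / κ
                linarith
              have h4 : (cf + M' * (3 / κ + 1)) * d
                  = cf * d + 3 * (M' * d) / κ + M' * d := by ring
              linarith [mul_nonneg hcf hd0]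
      · rw [hFnW x hx, hFnW y hy, sub_zero, norm_zero, zero_mul]
        positivity
  · -- agreement on A
    intro a ha
    rw [if_pos (hAW ha)]
    have hea : infDist a A = 0 := infDist_zero_of_mem ha
    have hga : 0 < infDist a Wᶜ := hgpos a (hAW ha)
    rw [hea, zero_add, div_self (ne_of_gt hga)]
    simp
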